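/- Let P be a pyramid with row lengths r_1 ≥ ... ≥ r_N ≥ 1 together with a parity assignment π : {1,...,N} → {0,1} on its rows, and let p (resp. q) be the multiset of lengths of the rows j with π(j) = 0 (resp. π(j) = 1). Let V(P)_0 (resp. V(P)_1) be the span of the basis vectors v_{(j,c)} with π(j) = 0 (resp. π(j) = 1). Then: e(P) and h(P) both preserve V(P)_0 and V(P)_1; the restriction of e(P) to V(P)_0 is nilpotent of Jordan type p and its restriction to V(P)_1 is nilpotent of Jordan type q; ⁅h(P), e(P)⁆ = 2 • e(P); and the pair (h(P), e(P)) is good in End(V(P)): ad e(P) is injective from the j-eigenspace of ad h(P) to the (j+2)-eigenspace for every integer j ≤ -1 and surjective for every integer j ≥ -1. (This is the forward direction of the classification of good ℤ-gradings of gl(m|n) by pyramids, since for an even element e of gl(m|n) the super adjoint action of e coincides with the commutator action on all of End(V).) -/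

import Mathlib

/-- A pyramid with row lengths `r 0 ≥ r 1 ≥ ... ≥ r (N-1) ≥ 1` (bottom row first).
Row `j` consists of boxes at columns `f j, f j + 2, ..., l j` where
`l j = f j + 2 * (r j - 1)`; the bottom row is centered at `0` (`f 0 = -(l 0)`), and
consecutive rows satisfy `f j ≤ f (j+1) ≤ l (j+1) ≤ l j`. -/
structure Pyramid where
  N : ℕ
  hN : 0 < N
  r : Fin N → ℕ
  f : Fin N → ℤ
  r_pos : ∀ j, 0 < r j
  r_anti : ∀ i j : Fin N, i ≤ j → r j ≤ r i
  centered : f ⟨0, hN⟩ = -(f ⟨0, hN⟩ + 2 * ((r ⟨0, hN⟩ : ℤ) - 1))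
  left_nested : ∀ i j : Fin N, (i : ℕ) + 1 = (j : ℕ) → f i ≤ f j
  right_nested : ∀ i j : Fin N, (i : ℕ) + 1 = (j : ℕ) →
    f j + 2 * ((r j : ℤ) - 1) ≤ f i + 2 * ((r i : ℤ) - 1)

namespace Pyramid

/-- The set of boxes of the pyramid: the `i`-th box (from the left) of row `j`. -/
abbrev Box (P : Pyramid) : Type := (j : Fin P.N) × Fin (P.r j)

/-- The column (first coordinate) of a box: box `(j, i)` sits at column `f j + 2 * i`. -/
def col (P : Pyramid) (b : P.Box) : ℤ := P.f b.1 + 2 * (b.2 : ℤ)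

/-- The vector space `V(P) = ℂ^{B(P)}`. -/
abbrev V (P : Pyramid) : Type := P.Box → ℂ

/-- The nilpotent endomorphism `e(P)` of `V(P)`, sending the basis vector of a box to
the basis vector of its right neighbour (i.e. the box in the same row whose column is
larger by 2), or to `0` if there is no right neighbour. -/
noncomputable def E (P : Pyramid) : Module.End ℂ P.V :=
  Matrix.toLin' (Matrix.of fun b b' : P.Box =>
    if b.1 = b'.1 ∧ (b.2 : ℕ) = (b'.2 : ℕ) + 1 then (1 : ℂ) else 0)

/-- The semisimple endomorphism `h(P)` of `V(P)`, acting on the basis vector of a box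
by its column. -/
noncomputable def H (P : Pyramid) : Module.End ℂ P.V :=
  Matrix.toLin' (Matrix.diagonal fun b : P.Box => (P.col b : ℂ))

end Pyramid

/-- The set of `ad h`-eigenvectors of `End(V)` with eigenvalue `j ∈ ℤ`:
the `j`-th graded piece of the `ℤ`-grading of `End(V)` determined by `h`. -/
def gradedPiece {V : Type*} [AddCommGroup V] [Module ℂ V]
    (h : Module.End ℂ V) (j : ℤ) : Set (Module.End ℂ V) :=
  {x | ⁅h, x⁆ = (j : ℂ) • x}

/-- The pair `(h, e)` is *good* if `ad e` is injective from the `j`-eigenspace of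
`ad h` to the `(j+2)`-eigenspace for every integer `j ≤ -1`, and surjective onto the
`(j+2)`-eigenspace for every integer `j ≥ -1`. -/
def IsGoodPair {V : Type*} [AddCommGroup V] [Module ℂ V]
    (h e : Module.End ℂ V) : Prop :=
  (∀ j : ℤ, j ≤ -1 →
    Set.InjOn (fun x : Module.End ℂ V => ⁅e, x⁆) (gradedPiece h j)) ∧
  (∀ j : ℤ, -1 ≤ j →
    Set.SurjOn (fun x : Module.End ℂ V => ⁅e, x⁆) (gradedPiece h j)
      (gradedPiece h (j + 2)))
/-- Given a parity assignment `π` on the rows of a pyramid `P`, the subspace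
`V(P)_i` of `V(P)` spanned by the basis vectors of boxes lying in rows of parity
`i`. -/
noncomputable def Pyramid.Vpart (P : Pyramid) (π : Fin P.N → Fin 2) (i : Fin 2) :
    Submodule ℂ P.V where
  carrier := {v | ∀ b : P.Box, π b.1 ≠ i → v b = 0}
  add_mem' := by
    intro x y hx hy b hb
    simp [Pi.add_apply, hx b hb, hy b hb]
  zero_mem' := by intro b hb; rfl
  smul_mem' := by
    intro c v hv b hb
    simp [Pi.smul_apply, hv b hb]

set_option maxHeartbeats 1000000
set_option synthInstance.maxHeartbeats 400000

namespace PyramidAux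
open Pyramid

variable (P : Pyramid)

/-- matrix of `E`. -/
def ME : Matrix P.Box P.Box ℂ :=
  Matrix.of fun b b' : P.Box =>
    if b.1 = b'.1 ∧ (b.2 : ℕ) = (b'.2 : ℕ) + 1 then (1 : ℂ) else 0

def MD : Matrix P.Box P.Box ℂ := Matrix.diagonal fun b : P.Box => (P.col b : ℂ)

lemma toMatrix'_E : LinearMap.toMatrix' P.E = ME P := by
  simp [Pyramid.E, ME, LinearMap.toMatrix'_toLin']

lemma toMatrix'_H : LinearMap.toMatrix' P.H = MD P := by
  simp [Pyramid.H, MD, LinearMap.toMatrix'_toLin']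

lemma pred_lt {P : Pyramid} (b : P.Box) : (b.2 : ℕ) - 1 < P.r b.1 :=
  lt_of_le_of_lt (Nat.sub_le _ _) b.2.2

/-- collapse of the sum defining left multiplication by `ME`. -/
lemma sum_ME_left (g : P.Box → ℂ) (b : P.Box) :
    (∑ c : P.Box, (if b.1 = c.1 ∧ (b.2 : ℕ) = (c.2 : ℕ) + 1 then (1:ℂ) else 0) * g c)
      = if 0 < (b.2 : ℕ) then g ⟨b.1, ⟨(b.2 : ℕ) - 1, pred_lt b⟩⟩ else 0 := by
  split_ifs with h
  · rw [Finset.sum_eq_single (⟨b.1, ⟨(b.2 : ℕ) - 1, pred_lt b⟩⟩ : P.Box)]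
    · rw [if_pos ⟨rfl, by simp; omega⟩, one_mul]
    · intro c _ hc
      rw [if_neg, zero_mul]
      rintro ⟨h1, h2⟩
      apply hc
      obtain ⟨b1, b2⟩ := b
      obtain ⟨c1, c2⟩ := c
      simp only at h1 h2
      subst h1
      simp only [Sigma.mk.inj_iff, heq_eq_eq, true_and]
      apply Fin.ext
      simp only [Fin.val_mk]
      omega
    · intro h; exact absurd (Finset.mem_univ _) h
  · apply Finset.sum_eq_zero
    intro c _
    rw [if_neg, zero_mul]
    rintro ⟨h1, h2⟩
    omega

lemma sum_ME_right (g : P.Box → ℂ) (c : P.Box) :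
    (∑ d : P.Box, g d * (if d.1 = c.1 ∧ (d.2 : ℕ) = (c.2 : ℕ) + 1 then (1:ℂ) else 0))
      = if h : (c.2 : ℕ) + 1 < P.r c.1 then g ⟨c.1, ⟨(c.2 : ℕ) + 1, h⟩⟩ else 0 := by
  split_ifs with h
  · rw [Finset.sum_eq_single (⟨c.1, ⟨(c.2 : ℕ) + 1, h⟩⟩ : P.Box)]
    · rw [if_pos ⟨rfl, rfl⟩, mul_one]
    · intro d _ hd
      rw [if_neg, mul_zero]
      rintro ⟨h1, h2⟩
      apply hd
      obtain ⟨d1, d2⟩ := d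
      obtain ⟨c1, c2⟩ := c
      simp only at h1 h2
      subst h1
      simp only [Sigma.mk.inj_iff, heq_eq_eq, true_and]
      apply Fin.ext
      simp only [Fin.val_mk]
      omega
    · intro h'; exact absurd (Finset.mem_univ _) h'
  · apply Finset.sum_eq_zero
    intro d _
    rw [if_neg, mul_zero]
    rintro ⟨h1, h2⟩
    obtain ⟨d1, d2⟩ := d
    obtain ⟨c1, c2⟩ := c
    simp only at h1 h2
    subst h1
    exact absurd (h2 ▸ d2.2) h

lemma ME_mul_apply (A : Matrix P.Box P.Box ℂ) (b b' : P.Box) :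
    (ME P * A) b b' =
      if 0 < (b.2 : ℕ) then A ⟨b.1, ⟨(b.2 : ℕ) - 1, pred_lt b⟩⟩ b' else 0 := by
  rw [Matrix.mul_apply]
  exact sum_ME_left P (fun c => A c b') b

lemma mul_ME_apply (A : Matrix P.Box P.Box ℂ) (b c : P.Box) :
    (A * ME P) b c =
      if h : (c.2 : ℕ) + 1 < P.r c.1 then A b ⟨c.1, ⟨(c.2 : ℕ) + 1, h⟩⟩ else 0 := by
  rw [Matrix.mul_apply]
  exact sum_ME_right P (fun d => A b d) c

lemma E_apply (v : P.V) (b : P.Box) :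
    P.E v b = if 0 < (b.2 : ℕ) then v ⟨b.1, ⟨(b.2 : ℕ) - 1, pred_lt b⟩⟩ else 0 := by
  rw [Pyramid.E, Matrix.toLin'_apply, Matrix.mulVec, dotProduct]
  exact sum_ME_left P v b

lemma H_apply (v : P.V) (b : P.Box) : P.H v b = (P.col b : ℂ) * v b := by
  rw [Pyramid.H, Matrix.toLin'_apply, Matrix.mulVec_diagonal]




lemma chain_mono (g : Fin P.N → ℤ) (hstep : ∀ i j : Fin P.N, (i : ℕ) + 1 = (j : ℕ) → g i ≤ g j)
    (a a' : Fin P.N) (h : a ≤ a') : g a ≤ g a' := by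
  obtain ⟨d, hd⟩ : ∃ d, (a : ℕ) + d = (a' : ℕ) := ⟨(a' : ℕ) - (a : ℕ), by
    have := (Fin.le_def).mp h; omega⟩
  induction d generalizing a' with
  | zero => have : a = a' := Fin.ext (by omega); rw [this]
  | succ n ih =>
    have hn : (a : ℕ) + n < P.N := by omega
    refine le_trans (ih ⟨(a : ℕ) + n, hn⟩ ?_ rfl) (hstep ⟨(a : ℕ) + n, hn⟩ a' (by simp; omega))
    rw [Fin.le_def]; simp

lemma f_mono (a a' : Fin P.N) (h : a ≤ a') : P.f a ≤ P.f a' :=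
  chain_mono P P.f P.left_nested a a' h

lemma l_anti (a a' : Fin P.N) (h : a ≤ a') :
    P.f a' + 2 * ((P.r a' : ℤ) - 1) ≤ P.f a + 2 * ((P.r a : ℤ) - 1) := by
  have := chain_mono P (fun i => -(P.f i + 2 * ((P.r i : ℤ) - 1)))
    (fun i j hij => neg_le_neg (P.right_nested i j hij)) a a' h
  linarith

lemma HE_comm : ⁅P.H, P.E⁆ = (2 : ℂ) • P.E := by
  apply LinearMap.toMatrix'.injective
  rw [Ring.lie_def, map_sub, LinearMap.toMatrix'_mul, LinearMap.toMatrix'_mul, map_smul,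
    toMatrix'_E, toMatrix'_H]
  ext b b'
  simp only [MD, Matrix.sub_apply, Matrix.diagonal_mul, Matrix.mul_diagonal,
    Matrix.smul_apply, smul_eq_mul, ME, Matrix.of_apply]
  split_ifs with hc
  · obtain ⟨h1, h2⟩ := hc
    have h2' : ((b.2 : ℕ) : ℂ) = ((b'.2 : ℕ) : ℂ) + 1 := by exact_mod_cast h2
    simp only [Pyramid.col, h1]
    push_cast
    rw [h2']
    ring
  · simp

lemma mem_gradedPiece_iff (X : Module.End ℂ P.V) (j : ℤ) :
    X ∈ gradedPiece P.H j ↔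
      ∀ b b' : P.Box, P.col b - P.col b' ≠ j → LinearMap.toMatrix' X b b' = 0 := by
  have key : ⁅P.H, X⁆ = (j : ℂ) • X ↔
      MD P * LinearMap.toMatrix' X - LinearMap.toMatrix' X * MD P
        = (j : ℂ) • LinearMap.toMatrix' X := by
    rw [← (LinearMap.toMatrix' (R := ℂ)).injective.eq_iff (a := ⁅P.H, X⁆), Ring.lie_def,
      map_sub, LinearMap.toMatrix'_mul, LinearMap.toMatrix'_mul, map_smul, toMatrix'_H]
  constructor
  · intro hX b b' hw
    have := key.mp hX
    have h2 := congrFun (congrFun this b) b'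
    simp only [MD, Matrix.sub_apply, Matrix.diagonal_mul, Matrix.mul_diagonal,
      Matrix.smul_apply, smul_eq_mul] at h2
    have h3 : ((P.col b - P.col b' - j : ℤ) : ℂ) * LinearMap.toMatrix' X b b' = 0 := by
      push_cast
      push_cast at h2
      linear_combination h2
    rcases mul_eq_zero.mp h3 with h4 | h4
    · exfalso
      apply hw
      have h5 : P.col b - P.col b' - j = 0 := by exact_mod_cast h4
      omega
    · exact h4
  · intro hs
    apply key.mpr
    ext b b'
    simp only [MD, Matrix.sub_apply, Matrix.diagonal_mul, Matrix.mul_diagonal,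
      Matrix.smul_apply, smul_eq_mul]
    by_cases hw : P.col b - P.col b' = j
    · have : ((P.col b : ℂ)) - ((P.col b' : ℂ)) = (j : ℂ) := by exact_mod_cast hw
      linear_combination LinearMap.toMatrix' X b b' * this
    · rw [hs b b' hw]; simp


lemma col_le_l {P : Pyramid} (b : P.Box) : P.col b ≤ P.f b.1 + 2 * ((P.r b.1 : ℤ) - 1) := by
  have : (b.2 : ℕ) < P.r b.1 := b.2.2
  have : ((b.2 : ℕ) : ℤ) ≤ (P.r b.1 : ℤ) - 1 := by omega
  unfold Pyramid.col
  omega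

lemma f_le_col {P : Pyramid} (b : P.Box) : P.f b.1 ≤ P.col b := by
  have : (0 : ℤ) ≤ ((b.2 : ℕ) : ℤ) := Int.natCast_nonneg _
  unfold Pyramid.col
  omega

/-- Case A of the injectivity argument: rows `b.1 ≤ b'.1`. -/
lemma injA (j : ℤ) (hj : j ≤ -1) (A : Matrix P.Box P.Box ℂ)
    (hwt : ∀ b b' : P.Box, P.col b - P.col b' ≠ j → A b b' = 0)
    (hcomm : ME P * A = A * ME P) :
    ∀ n : ℕ, ∀ b b' : P.Box, b.1 ≤ b'.1 → P.r b'.1 - (b'.2 : ℕ) ≤ n → A b b' = 0 := by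
  intro n
  induction n with
  | zero => intro b b' _ hn; exact absurd b'.2.2 (by omega)
  | succ n ih =>
    intro b b' hr hn
    by_cases hA : A b b' = 0
    · exact hA
    have hw : P.col b - P.col b' = j := by
      by_contra hcon; exact hA (hwt b b' hcon)
    -- b.2 + 1 < r b.1
    have hb2 : (b.2 : ℕ) + 1 < P.r b.1 := by
      rcases Nat.lt_or_ge ((b.2 : ℕ) + 1) (P.r b.1) with h | h
      · exact h
      · exfalso
        have hbtop : (b.2 : ℕ) = P.r b.1 - 1 := by have := b.2.2; omega
        have h1 : P.col b = P.f b.1 + 2 * ((P.r b.1 : ℤ) - 1) := by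
          unfold Pyramid.col
          rw [hbtop]
          have := P.r_pos b.1
          push_cast [Nat.cast_sub (by omega : 1 ≤ P.r b.1)]
          ring
        have h2 := col_le_l b'
        have h3 := l_anti P b.1 b'.1 hr
        omega
    -- the commutator relation at (b⁺, b')
    set bp : P.Box := ⟨b.1, ⟨(b.2 : ℕ) + 1, hb2⟩⟩ with hbp
    have hrel := congrFun (congrFun hcomm bp) b'
    rw [ME_mul_apply, mul_ME_apply] at hrel
    rw [if_pos (by show 0 < (b.2 : ℕ) + 1; omega)] at hrel
    have hpred : (⟨bp.1, ⟨(bp.2 : ℕ) - 1, pred_lt bp⟩⟩ : P.Box) = b := by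
      obtain ⟨b1, b2⟩ := b
      rfl
    rw [hpred] at hrel
    rw [hrel]
    split_ifs with hs
    · exact ih bp ⟨b'.1, ⟨(b'.2 : ℕ) + 1, hs⟩⟩ hr (by simp; omega)
    · rfl

/-- Case B of the injectivity argument: rows `b'.1 ≤ b.1`. -/
lemma injB (j : ℤ) (hj : j ≤ -1) (A : Matrix P.Box P.Box ℂ)
    (hwt : ∀ b b' : P.Box, P.col b - P.col b' ≠ j → A b b' = 0)
    (hcomm : ME P * A = A * ME P) :
    ∀ n : ℕ, ∀ b b' : P.Box, b'.1 ≤ b.1 → (b'.2 : ℕ) ≤ n → A b b' = 0 := by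
  intro n
  induction n with
  | zero =>
    intro b b' hr hn
    by_cases hA : A b b' = 0
    · exact hA
    exfalso
    have hw : P.col b - P.col b' = j := by
      by_contra hcon; exact hA (hwt b b' hcon)
    have hcol : P.col b' = P.f b'.1 := by
      unfold Pyramid.col; have : (b'.2 : ℕ) = 0 := by omega
      rw [this]; push_cast; ring
    have h2 := f_le_col b
    have h3 := f_mono P b'.1 b.1 hr
    omega
  | succ n ih =>
    intro b b' hr hn
    by_cases hA : A b b' = 0
    · exact hA
    have hw : P.col b - P.col b' = j := by
      by_contra hcon; exact hA (hwt b b' hcon)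
    have hb'2 : 0 < (b'.2 : ℕ) := by
      by_contra hcon
      have h : (b'.2 : ℕ) = 0 := by omega
      have hcol : P.col b' = P.f b'.1 := by
        unfold Pyramid.col; rw [h]; push_cast; ring
      have h2 := f_le_col b
      have h3 := f_mono P b'.1 b.1 hr
      omega
    set bm : P.Box := ⟨b'.1, ⟨(b'.2 : ℕ) - 1, pred_lt b'⟩⟩ with hbm
    have hrel := congrFun (congrFun hcomm b) bm
    rw [ME_mul_apply, mul_ME_apply] at hrel
    have hmlt : (bm.2 : ℕ) + 1 < P.r bm.1 := by show (b'.2 : ℕ) - 1 + 1 < P.r b'.1; omega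
    rw [dif_pos hmlt] at hrel
    have hsucc : (⟨bm.1, ⟨(bm.2 : ℕ) + 1, hmlt⟩⟩ : P.Box) = b' := by
      obtain ⟨b1, b2⟩ := b'
      refine Sigma.ext (rfl : bm.1 = b1) ?_
      apply heq_of_eq
      apply Fin.ext
      show (b2 : ℕ) - 1 + 1 = b2
      exact Nat.sub_add_cancel hb'2
    rw [hsucc] at hrel
    rw [← hrel]
    split_ifs with hp
    · exact ih ⟨b.1, ⟨(b.2 : ℕ) - 1, pred_lt b⟩⟩ bm hr (by show (b'.2 : ℕ) - 1 ≤ n; omega)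
    · rfl

lemma inj_core (j : ℤ) (hj : j ≤ -1) (A : Matrix P.Box P.Box ℂ)
    (hwt : ∀ b b' : P.Box, P.col b - P.col b' ≠ j → A b b' = 0)
    (hcomm : ME P * A = A * ME P) : A = 0 := by
  ext b b'
  rcases le_total b.1 b'.1 with h | h
  · exact injA P j hj A hwt hcomm (P.r b'.1) b b' h (by omega)
  · exact injB P j hj A hwt hcomm (b'.2 : ℕ) b b' h le_rfl


lemma injOn_bracket (j : ℤ) (hj : j ≤ -1) :
    Set.InjOn (fun x : Module.End ℂ P.V => ⁅P.E, x⁆) (gradedPiece P.H j) := by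
  intro x hx y hy heq
  have hx' : ⁅P.H, x⁆ = ((j : ℤ) : ℂ) • x := hx
  have hy' : ⁅P.H, y⁆ = ((j : ℤ) : ℂ) • y := hy
  have hmem : x - y ∈ gradedPiece P.H j := by
    show ⁅P.H, x - y⁆ = ((j : ℤ) : ℂ) • (x - y)
    rw [show ⁅P.H, x - y⁆ = ⁅P.H, x⁆ - ⁅P.H, y⁆ by simp only [Ring.lie_def, mul_sub, sub_mul]; abel, hx', hy', smul_sub]
  have hwt := (mem_gradedPiece_iff P (x - y) j).mp hmem
  have hcomm0 : ⁅P.E, x - y⁆ = 0 := by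
    simp only at heq
    rw [show ⁅P.E, x - y⁆ = ⁅P.E, x⁆ - ⁅P.E, y⁆ by simp only [Ring.lie_def, mul_sub, sub_mul]; abel, heq, sub_self]
  have hc : ME P * LinearMap.toMatrix' (x - y) = LinearMap.toMatrix' (x - y) * ME P := by
    have h2 := congrArg LinearMap.toMatrix' hcomm0
    rw [Ring.lie_def, map_sub, LinearMap.toMatrix'_mul, LinearMap.toMatrix'_mul,
      toMatrix'_E, map_zero, sub_eq_zero] at h2
    exact h2
  have hz := inj_core P j hj _ hwt hc
  have hz2 : x - y = 0 := by
    apply LinearMap.toMatrix'.injective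
    rw [hz, map_zero]
  exact sub_eq_zero.mp hz2

/-! ### Surjectivity machinery -/

/-- A bound larger than every row length. -/
def KB : ℕ := ∑ a, P.r a

lemma r_le_KB (a : Fin P.N) : P.r a ≤ KB P :=
  Finset.single_le_sum (fun i _ => Nat.zero_le _) (Finset.mem_univ a)

/-- `B` extended to arbitrary natural indices, by zero. -/
def Bt (B : Matrix P.Box P.Box ℂ) (a : Fin P.N) (i : ℕ) (a' : Fin P.N) (i' : ℕ) : ℂ :=
  if h : i < P.r a ∧ i' < P.r a' then B ⟨a, ⟨i, h.1⟩⟩ ⟨a', ⟨i', h.2⟩⟩ else 0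

lemma Bt_eq (B : Matrix P.Box P.Box ℂ) (b b' : P.Box) :
    Bt P B b.1 (b.2 : ℕ) b'.1 (b'.2 : ℕ) = B b b' := by
  rw [Bt, dif_pos ⟨b.2.2, b'.2.2⟩]

lemma Bt_zero_right (B : Matrix P.Box P.Box ℂ) (a a' : Fin P.N) (i i' : ℕ)
    (h : P.r a' ≤ i') : Bt P B a i a' i' = 0 := by
  rw [Bt, dif_neg]; omega

/-- partial "case A" chain sum, at the level of natural indices. -/
noncomputable def csA (B : Matrix P.Box P.Box ℂ) (a a' : Fin P.N) (i i' : ℕ) : ℂ :=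
  ∑ t ∈ Finset.range (KB P + 1), Bt P B a (i + 1 + t) a' (i' + t)

/-- partial "case B" chain sum, at the level of natural indices. -/
noncomputable def csB (B : Matrix P.Box P.Box ℂ) (a a' : Fin P.N) (i i' : ℕ) : ℂ :=
  ∑ t ∈ Finset.range (KB P + 1),
    if t ≤ i ∧ t + 1 ≤ i' then Bt P B a (i - t) a' (i' - 1 - t) else 0

lemma csA_zero_right (B : Matrix P.Box P.Box ℂ) (a a' : Fin P.N) (i i' : ℕ)
    (h : P.r a' ≤ i') : csA P B a a' i i' = 0 := by
  apply Finset.sum_eq_zero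
  intro t _
  exact Bt_zero_right P B a a' _ _ (by omega)

lemma csA_step (B : Matrix P.Box P.Box ℂ) (a a' : Fin P.N) (i i' : ℕ) :
    csA P B a a' i i' = Bt P B a (i + 1) a' i' + csA P B a a' (i + 1) (i' + 1) := by
  unfold csA
  rw [Finset.sum_range_succ' (fun t => Bt P B a (i + 1 + t) a' (i' + t)) (KB P)]
  rw [Finset.sum_range_succ (fun t => Bt P B a (i + 1 + 1 + t) a' (i' + 1 + t)) (KB P)]
  have hlast : Bt P B a (i + 1 + 1 + KB P) a' (i' + 1 + KB P) = 0 :=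
    Bt_zero_right P B a a' _ _ (by have := r_le_KB P a'; omega)
  rw [hlast]
  have e0 : Bt P B a (i + 1 + 0) a' (i' + 0) = Bt P B a (i + 1) a' i' := by
    have e1 : i + 1 + 0 = i + 1 := by omega
    have e2 : i' + 0 = i' := by omega
    rw [e1, e2]
  have esum : ∑ t ∈ Finset.range (KB P), Bt P B a (i + 1 + (t + 1)) a' (i' + (t + 1))
      = ∑ t ∈ Finset.range (KB P), Bt P B a (i + 1 + 1 + t) a' (i' + 1 + t) := by
    apply Finset.sum_congr rfl
    intro t _
    have e1 : i + 1 + (t + 1) = i + 1 + 1 + t := by omega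
    have e2 : i' + (t + 1) = i' + 1 + t := by omega
    rw [e1, e2]
  rw [e0, esum]
  ring

lemma csB_step (B : Matrix P.Box P.Box ℂ) (a a' : Fin P.N) (i i' : ℕ)
    (hi' : i' < P.r a') :
    csB P B a a' i (i' + 1) =
      Bt P B a i a' i' + (if 1 ≤ i then csB P B a a' (i - 1) i' else 0) := by
  unfold csB
  rw [Finset.sum_range_succ'
    (fun t => if t ≤ i ∧ t + 1 ≤ i' + 1 then Bt P B a (i - t) a' (i' + 1 - 1 - t) else 0) (KB P)]
  have h0 : (if 0 ≤ i ∧ 0 + 1 ≤ i' + 1 then Bt P B a (i - 0) a' (i' + 1 - 1 - 0) else 0)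
      = Bt P B a i a' i' := by
    rw [if_pos ⟨Nat.zero_le _, by omega⟩]
    have e1 : i - 0 = i := by omega
    have e2 : i' + 1 - 1 - 0 = i' := by omega
    rw [e1, e2]
  have etail : (∑ t ∈ Finset.range (KB P),
      if t + 1 ≤ i ∧ t + 1 + 1 ≤ i' + 1 then
        Bt P B a (i - (t + 1)) a' (i' + 1 - 1 - (t + 1)) else 0)
      = (if 1 ≤ i then csB P B a a' (i - 1) i' else 0) := by
    by_cases hi : 1 ≤ i
    · rw [if_pos hi]
      unfold csB
      rw [Finset.sum_range_succ
        (fun t => if t ≤ i - 1 ∧ t + 1 ≤ i' then Bt P B a (i - 1 - t) a' (i' - 1 - t) else 0) (KB P)]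
      have hlast : (if KB P ≤ i - 1 ∧ KB P + 1 ≤ i' then
          Bt P B a (i - 1 - KB P) a' (i' - 1 - KB P) else 0) = 0 := by
        rw [if_neg]; have := r_le_KB P a'; omega
      rw [hlast, add_zero]
      apply Finset.sum_congr rfl
      intro t _
      by_cases hc : t + 1 ≤ i ∧ t + 1 + 1 ≤ i' + 1
      · rw [if_pos hc, if_pos (show t ≤ i - 1 ∧ t + 1 ≤ i' by omega)]
        have e1 : i - (t + 1) = i - 1 - t := by omega
        have e2 : i' + 1 - 1 - (t + 1) = i' - 1 - t := by omega
        rw [e1, e2]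
      · rw [if_neg hc, if_neg (show ¬(t ≤ i - 1 ∧ t + 1 ≤ i') by omega)]
    · rw [if_neg hi]
      apply Finset.sum_eq_zero
      intro t _
      rw [if_neg (by omega)]
  rw [h0, etail]
  exact add_comm _ _


lemma col_pred {P : Pyramid} (b : P.Box) (hb : 0 < (b.2 : ℕ)) :
    P.col ⟨b.1, ⟨(b.2 : ℕ) - 1, pred_lt b⟩⟩ = P.col b - 2 := by
  show P.f b.1 + 2 * (((b.2 : ℕ) - 1 : ℕ) : ℤ) = P.f b.1 + 2 * ((b.2 : ℕ) : ℤ) - 2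
  omega

lemma col_succ {P : Pyramid} (b' : P.Box) (h : (b'.2 : ℕ) + 1 < P.r b'.1) :
    P.col ⟨b'.1, ⟨(b'.2 : ℕ) + 1, h⟩⟩ = P.col b' + 2 := by
  show P.f b'.1 + 2 * (((b'.2 : ℕ) + 1 : ℕ) : ℤ) = P.f b'.1 + 2 * ((b'.2 : ℕ) : ℤ) + 2
  push_cast
  ring

/-- The candidate preimage matrix. -/
noncomputable def sol (j : ℤ) (B : Matrix P.Box P.Box ℂ) : Matrix P.Box P.Box ℂ :=
  Matrix.of fun b b' =>
    if P.col b - P.col b' = j then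
      (if b.1 ≤ b'.1 then csA P B b.1 b'.1 (b.2 : ℕ) (b'.2 : ℕ)
       else -csB P B b.1 b'.1 (b.2 : ℕ) (b'.2 : ℕ))
    else 0

lemma sol_supp (j : ℤ) (B : Matrix P.Box P.Box ℂ) (b b' : P.Box)
    (h : P.col b - P.col b' ≠ j) : sol P j B b b' = 0 := if_neg h

lemma sol_spec (j : ℤ) (hj : -1 ≤ j) (B : Matrix P.Box P.Box ℂ)
    (hwt : ∀ b b' : P.Box, P.col b - P.col b' ≠ j + 2 → B b b' = 0) :
    ME P * sol P j B - sol P j B * ME P = B := by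
  ext b b'
  rw [Matrix.sub_apply, ME_mul_apply, mul_ME_apply]
  by_cases hw : P.col b - P.col b' = j + 2
  case neg =>
    rw [hwt b b' hw]
    have h1 : (if 0 < (b.2 : ℕ) then sol P j B ⟨b.1, ⟨(b.2 : ℕ) - 1, pred_lt b⟩⟩ b' else 0)
        = 0 := by
      split_ifs with h
      · exact sol_supp P j B _ _ (by rw [col_pred b h]; omega)
      · rfl
    have h2 : (if h : (b'.2 : ℕ) + 1 < P.r b'.1 then
        sol P j B b ⟨b'.1, ⟨(b'.2 : ℕ) + 1, h⟩⟩ else 0) = 0 := by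
      split_ifs with h
      · exact sol_supp P j B _ _ (by rw [col_succ b' h]; omega)
      · rfl
    rw [h1, h2, sub_zero]
  case pos =>
    by_cases hr : b.1 ≤ b'.1
    · -- case A
      have hb2 : 0 < (b.2 : ℕ) := by
        by_contra hcon
        have hb0 : (b.2 : ℕ) = 0 := by omega
        have hcb : P.col b = P.f b.1 := by
          unfold Pyramid.col; rw [hb0]; push_cast; ring
        have h2 := f_mono P b.1 b'.1 hr
        have h3 := f_le_col b'
        omega
      rw [if_pos hb2]
      have hsol1 : sol P j B ⟨b.1, ⟨(b.2 : ℕ) - 1, pred_lt b⟩⟩ b'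
          = csA P B b.1 b'.1 ((b.2 : ℕ) - 1) (b'.2 : ℕ) := by
        show (if _ then _ else _) = _
        rw [col_pred b hb2, if_pos (by omega : P.col b - 2 - P.col b' = j), if_pos hr]
      have hstep := csA_step P B b.1 b'.1 ((b.2 : ℕ) - 1) (b'.2 : ℕ)
      have e : (b.2 : ℕ) - 1 + 1 = (b.2 : ℕ) := by omega
      rw [e] at hstep
      rw [hsol1, hstep, Bt_eq]
      split_ifs with hs
      · have hsol2 : sol P j B b ⟨b'.1, ⟨(b'.2 : ℕ) + 1, hs⟩⟩
            = csA P B b.1 b'.1 (b.2 : ℕ) ((b'.2 : ℕ) + 1) := by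
          show (if _ then _ else _) = _
          rw [col_succ b' hs, if_pos (by omega : P.col b - (P.col b' + 2) = j), if_pos hr]
        rw [hsol2]
        ring
      · have hz : csA P B b.1 b'.1 (b.2 : ℕ) ((b'.2 : ℕ) + 1) = 0 :=
          csA_zero_right P B b.1 b'.1 _ _ (by have := b'.2.2; omega)
        rw [hz]
        ring
    · -- case B
      have hr' : b'.1 ≤ b.1 := le_of_not_ge hr
      have hb'2 : (b'.2 : ℕ) + 1 < P.r b'.1 := by
        by_contra hcon
        have hbtop : (b'.2 : ℕ) = P.r b'.1 - 1 := by have := b'.2.2; omega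
        have hcb' : P.col b' = P.f b'.1 + 2 * ((P.r b'.1 : ℤ) - 1) := by
          unfold Pyramid.col
          rw [hbtop]
          have := P.r_pos b'.1
          push_cast [Nat.cast_sub (by omega : 1 ≤ P.r b'.1)]
          ring
        have h2 := col_le_l b
        have h3 := l_anti P b'.1 b.1 hr'
        omega
      rw [dif_pos hb'2]
      have hsol2 : sol P j B b ⟨b'.1, ⟨(b'.2 : ℕ) + 1, hb'2⟩⟩
          = -csB P B b.1 b'.1 (b.2 : ℕ) ((b'.2 : ℕ) + 1) := by
        show (if _ then _ else _) = _
        rw [col_succ b' hb'2, if_pos (by omega : P.col b - (P.col b' + 2) = j), if_neg hr]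
      have hstep := csB_step P B b.1 b'.1 (b.2 : ℕ) (b'.2 : ℕ) b'.2.2
      rw [hsol2, hstep, Bt_eq]
      by_cases hp : 0 < (b.2 : ℕ)
      · rw [if_pos hp, if_pos (by omega : 1 ≤ (b.2 : ℕ))]
        have hsol1 : sol P j B ⟨b.1, ⟨(b.2 : ℕ) - 1, pred_lt b⟩⟩ b'
            = -csB P B b.1 b'.1 ((b.2 : ℕ) - 1) (b'.2 : ℕ) := by
          show (if _ then _ else _) = _
          rw [col_pred b hp, if_pos (by omega : P.col b - 2 - P.col b' = j), if_neg hr]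
        rw [hsol1]
        ring
      · rw [if_neg hp, if_neg (by omega : ¬ 1 ≤ (b.2 : ℕ))]
        ring

lemma surjOn_bracket (j : ℤ) (hj : -1 ≤ j) :
    Set.SurjOn (fun x : Module.End ℂ P.V => ⁅P.E, x⁆) (gradedPiece P.H j)
      (gradedPiece P.H (j + 2)) := by
  intro y hy
  have hwt := (mem_gradedPiece_iff P y (j + 2)).mp hy
  set B := LinearMap.toMatrix' y with hB
  refine ⟨Matrix.toLin' (sol P j B), ?_, ?_⟩
  · apply (mem_gradedPiece_iff P _ j).mpr
    intro b b' h
    rw [LinearMap.toMatrix'_toLin']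
    exact sol_supp P j B b b' h
  · show ⁅P.E, Matrix.toLin' (sol P j B)⁆ = y
    apply LinearMap.toMatrix'.injective
    rw [Ring.lie_def, map_sub, LinearMap.toMatrix'_mul, LinearMap.toMatrix'_mul,
      toMatrix'_E, LinearMap.toMatrix'_toLin']
    exact sol_spec P j hj B hwt


/-! ### Invariance, nilpotency and kernel dimensions -/

lemma box_cast_val {P : Pyramid} (v : P.V) (a : Fin P.N) (i i' : ℕ)
    (h : i < P.r a) (h' : i' < P.r a) (e : i = i') :
    v ⟨a, ⟨i, h⟩⟩ = v ⟨a, ⟨i', h'⟩⟩ := by subst e; rfl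

lemma E_pow_apply (k : ℕ) (v : P.V) (b : P.Box) :
    (P.E ^ k) v b = if h : k ≤ (b.2 : ℕ) then
      v ⟨b.1, ⟨(b.2 : ℕ) - k, lt_of_le_of_lt (Nat.sub_le _ _) b.2.2⟩⟩ else 0 := by
  induction k generalizing v b with
  | zero =>
    rw [pow_zero, dif_pos (Nat.zero_le _)]
    rfl
  | succ k ih =>
    rw [pow_succ, Module.End.mul_apply, ih (P.E v) b]
    by_cases h1 : k ≤ (b.2 : ℕ)
    · rw [dif_pos h1, E_apply]
      by_cases h2 : k + 1 ≤ (b.2 : ℕ)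
      · rw [dif_pos h2, if_pos (show 0 < ((⟨(b.2 : ℕ) - k,
          lt_of_le_of_lt (Nat.sub_le _ _) b.2.2⟩ : Fin (P.r b.1)) : ℕ) by
            simp only [Fin.val_mk]; omega)]
        exact box_cast_val v b.1 _ _ _ _ (by simp only [Fin.val_mk]; omega)
      · rw [dif_neg h2, if_neg (show ¬ 0 < ((⟨(b.2 : ℕ) - k,
          lt_of_le_of_lt (Nat.sub_le _ _) b.2.2⟩ : Fin (P.r b.1)) : ℕ) by
            simp only [Fin.val_mk]; omega)]
    · rw [dif_neg h1, dif_neg (by omega)]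

lemma E_pow_ker_iff (k : ℕ) (v : P.V) :
    (P.E ^ k) v = 0 ↔ ∀ b : P.Box, (b.2 : ℕ) + k < P.r b.1 → v b = 0 := by
  constructor
  · intro h b hb
    have h2 := congrFun h ⟨b.1, ⟨(b.2 : ℕ) + k, hb⟩⟩
    rw [E_pow_apply, dif_pos (show k ≤ ((⟨(b.2 : ℕ) + k, hb⟩ : Fin (P.r b.1)) : ℕ) by
      simp only [Fin.val_mk]; omega)] at h2
    calc v b = v ⟨b.1, ⟨((⟨(b.2 : ℕ) + k, hb⟩ : Fin (P.r b.1)) : ℕ) - k, _⟩⟩ :=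
          box_cast_val v b.1 (b.2 : ℕ) _ b.2.2 _ (by simp only [Fin.val_mk]; omega)
    _ = 0 := h2
  · intro h
    funext b
    rw [E_pow_apply]
    show _ = (0 : ℂ)
    split_ifs with h1
    · apply h
      simp only [Fin.val_mk]
      omega
    · rfl

lemma E_pow_KB : P.E ^ (KB P + 1) = 0 := by
  apply LinearMap.ext
  intro v
  funext b
  rw [E_pow_apply]
  show _ = (0 : ℂ)
  rw [dif_neg]
  have := r_le_KB P b.1
  have := b.2.2
  omega

lemma E_stab (π : Fin P.N → Fin 2) (i : Fin 2) :
    ∀ v ∈ P.Vpart π i, P.E v ∈ P.Vpart π i := by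
  intro v hv b hb
  rw [E_apply]
  split_ifs with h
  · exact hv _ hb
  · rfl

lemma H_stab (π : Fin P.N → Fin 2) (i : Fin 2) :
    ∀ v ∈ P.Vpart π i, P.H v ∈ P.Vpart π i := by
  intro v hv b hb
  rw [H_apply, hv b hb, mul_zero]

lemma count_min (r k : ℕ) : (∑ i' : Fin r, if r ≤ (i' : ℕ) + k then 1 else 0) = min k r := by
  rw [Fin.sum_univ_eq_sum_range (fun i' => if r ≤ i' + k then 1 else 0) r,
    ← Finset.card_filter]
  have he : (Finset.range r).filter (fun i' => r ≤ i' + k) = Finset.Ico (r - k) r := by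
    ext x
    simp only [Finset.mem_filter, Finset.mem_range, Finset.mem_Ico]
    omega
  rw [he, Nat.card_Ico]
  omega

lemma card_boxes (π : Fin P.N → Fin 2) (i : Fin 2) (k : ℕ) :
    (Finset.univ.filter (fun b : P.Box => π b.1 = i ∧ P.r b.1 ≤ (b.2 : ℕ) + k)).card
      = ∑ a ∈ Finset.univ.filter (fun a : Fin P.N => π a = i), min k (P.r a) := by
  rw [Finset.card_filter, ← Finset.univ_sigma_univ, Finset.sum_sigma, Finset.sum_filter]
  apply Finset.sum_congr rfl
  intro a _
  by_cases hp : π a = i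
  · simp only [hp, if_true, true_and]
    exact count_min (P.r a) k
  · simp [hp]

lemma finrank_ker_pow (π : Fin P.N → Fin 2) (i : Fin 2)
    (hE : ∀ v ∈ P.Vpart π i, P.E v ∈ P.Vpart π i) (k : ℕ) :
    Module.finrank ℂ (LinearMap.ker ((P.E.restrict hE) ^ k)) =
      ∑ a ∈ Finset.univ.filter (fun a : Fin P.N => π a = i), min k (P.r a) := by
  classical
  set p : P.Box → Prop := fun b => π b.1 = i ∧ P.r b.1 ≤ (b.2 : ℕ) + k with hp
  have hmemiff : ∀ x : ↥(P.Vpart π i),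
      x ∈ LinearMap.ker ((P.E.restrict hE) ^ k) ↔ ∀ b, ¬ p b → (x : P.V) b = 0 := by
    intro x
    rw [LinearMap.mem_ker, Module.End.pow_restrict]
    have hco : (((P.E ^ k).restrict
        (Module.End.pow_apply_mem_of_forall_mem k hE)) x = 0) ↔ (P.E ^ k) (x : P.V) = 0 := by
      rw [Subtype.ext_iff, LinearMap.restrict_coe_apply]
      rfl
    rw [hco, E_pow_ker_iff]
    constructor
    · intro h b hb
      by_cases hπ : π b.1 = i
      · exact h b (by simp only [hp] at hb; omega)
      · exact x.2 b hπ
    · intro h b hb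
      apply h
      simp only [hp]
      omega
  -- the linear equivalence with functions on the boxes satisfying `p`
  let F : ↥(LinearMap.ker ((P.E.restrict hE) ^ k)) →ₗ[ℂ] ({b : P.Box // p b} → ℂ) :=
    { toFun := fun x s => ((x : ↥(P.Vpart π i)) : P.V) s.1
      map_add' := fun x y => rfl
      map_smul' := fun c x => rfl }
  have hFbij : Function.Bijective F := by
    constructor
    · intro x y hxy
      apply Subtype.ext
      apply Subtype.ext
      funext b
      by_cases hb : p b
      · exact congrFun hxy ⟨b, hb⟩
      · rw [(hmemiff _).mp x.2 b hb, (hmemiff _).mp y.2 b hb]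
    · intro w
      set v : P.V := fun b => if h : p b then w ⟨b, h⟩ else 0 with hv
      have hv1 : v ∈ P.Vpart π i := by
        intro b hb
        rw [hv]
        exact dif_neg (fun hc => hb hc.1)
      have hv2 : (⟨v, hv1⟩ : ↥(P.Vpart π i)) ∈ LinearMap.ker ((P.E.restrict hE) ^ k) := by
        rw [hmemiff]
        intro b hb
        exact dif_neg hb
      refine ⟨⟨⟨v, hv1⟩, hv2⟩, ?_⟩
      funext s
      show v s.1 = w s
      rw [hv]
      simp only
      rw [dif_pos s.2]
  have : Module.finrank ℂ ↥(LinearMap.ker ((P.E.restrict hE) ^ k)) = Module.finrank ℂ ({b : P.Box // p b} → ℂ) :=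
    LinearEquiv.finrank_eq (LinearEquiv.ofBijective F hFbij)
  rw [this, Module.finrank_pi (R := ℂ), Fintype.card_subtype]
  exact card_boxes P π i k

end PyramidAux

/-- Let `P` be a pyramid with a parity assignment `π` on its rows,
and let `p` (resp. `q`) be the multiset of lengths of the rows `j` with `π j = 0`
(resp. `π j = 1`).  Then `e(P)` and `h(P)` both preserve `V(P)_0` and `V(P)_1`; the
restriction of `e(P)` to `V(P)_0` is nilpotent of Jordan type `p` and its restriction
to `V(P)_1` is nilpotent of Jordan type `q`; `⁅h(P), e(P)⁆ = 2 • e(P)`; and the pair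
`(h(P), e(P))` is good in `End(V(P))`.  (This is the forward direction of the
classification of good `ℤ`-gradings of `gl(m|n)` by pyramids.) -/
theorem pyramid_good_grading_super (P : Pyramid) (π : Fin P.N → Fin 2) :
    ∃ (hE0 : ∀ v ∈ P.Vpart π 0, P.E v ∈ P.Vpart π 0)
      (hE1 : ∀ v ∈ P.Vpart π 1, P.E v ∈ P.Vpart π 1)
      (_ : ∀ v ∈ P.Vpart π 0, P.H v ∈ P.Vpart π 0)
      (_ : ∀ v ∈ P.Vpart π 1, P.H v ∈ P.Vpart π 1),
      IsNilpotent (P.E.restrict hE0) ∧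
      (∀ k : ℕ, Module.finrank ℂ (LinearMap.ker (P.E.restrict hE0 ^ k)) =
        ∑ j ∈ Finset.univ.filter (fun j : Fin P.N => π j = 0), min k (P.r j)) ∧
      IsNilpotent (P.E.restrict hE1) ∧
      (∀ k : ℕ, Module.finrank ℂ (LinearMap.ker (P.E.restrict hE1 ^ k)) =
        ∑ j ∈ Finset.univ.filter (fun j : Fin P.N => π j = 1), min k (P.r j)) ∧
      ⁅P.H, P.E⁆ = (2 : ℂ) • P.E ∧ IsGoodPair P.H P.E := by
  refine ⟨PyramidAux.E_stab P π 0, PyramidAux.E_stab P π 1,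
    PyramidAux.H_stab P π 0, PyramidAux.H_stab P π 1, ?_, ?_, ?_, ?_, ?_, ?_⟩
  · refine ⟨PyramidAux.KB P + 1, ?_⟩
    rw [Module.End.pow_restrict]
    apply LinearMap.ext
    intro x
    apply Subtype.ext
    rw [LinearMap.restrict_coe_apply, PyramidAux.E_pow_KB]
    rfl
  · intro k
    exact PyramidAux.finrank_ker_pow P π 0 _ k
  · refine ⟨PyramidAux.KB P + 1, ?_⟩
    rw [Module.End.pow_restrict]
    apply LinearMap.ext
    intro x
    apply Subtype.ext
    rw [LinearMap.restrict_coe_apply, PyramidAux.E_pow_KB]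
    rfl
  · intro k
    exact PyramidAux.finrank_ker_pow P π 1 _ k
  · exact PyramidAux.HE_comm P
  · exact ⟨fun j hj => PyramidAux.injOn_bracket P j hj,
      fun j hj => PyramidAux.surjOn_bracket P j hj⟩
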